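/- arXiv:2505.05968 — 2 statements merged into one kernel-verified Lean document; each statement's English description precedes it below -/
import Mathlib

section
/- Let μ be the symmetric two-component mixture on ℝ² given by μ = (1/2) N((c,c), σ² I₂) + (1/2) N((−c,−c), σ² I₂) with c ≠ 0, σ > 0. Then each one-dimensional marginal of μ is the mixture (1/2) N(c, σ²) + (1/2) N(−c, σ²), and the product of the two marginals assigns to the set {(a₁,a₂) : a₁ a₂ < 0} probability 1/2, whereas μ assigns this set probability strictly less than 1/2. -/
open MeasureTheory ProbabilityTheory
open scoped NNReal ENNReal

lemma gauss_map_neg (m : ℝ) (v : ℝ≥0) :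
    (gaussianReal m v).map (fun x => -x) = gaussianReal (-m) v := by
  have h := gaussianReal_map_const_mul (μ := m) (v := v) (-1)
  have hv : (⟨(-1:ℝ)^2, sq_nonneg _⟩ : ℝ≥0) = 1 := by ext; norm_num
  simpa [hv, neg_one_mul] using h

lemma gauss_Ioi_neg (m : ℝ) (v : ℝ≥0) :
    gaussianReal (-m) v (Set.Ioi 0) = gaussianReal m v (Set.Iio 0) := by
  rw [← gauss_map_neg, Measure.map_apply measurable_neg measurableSet_Ioi]
  congr 1
  ext x
  simp

lemma gauss_Iio_neg (m : ℝ) (v : ℝ≥0) :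
    gaussianReal (-m) v (Set.Iio 0) = gaussianReal m v (Set.Ioi 0) := by
  rw [← gauss_map_neg, Measure.map_apply measurable_neg measurableSet_Iio]
  congr 1
  ext x
  simp

lemma gauss_add_one (m : ℝ) {v : ℝ≥0} (hv : v ≠ 0) :
    gaussianReal m v (Set.Iio 0) + gaussianReal m v (Set.Ioi 0) = 1 := by
  have h0 : gaussianReal m v {(0:ℝ)} = 0 :=
    gaussianReal_absolutelyContinuous m hv (measure_singleton 0)
  have hd : Disjoint (Set.Iio (0:ℝ)) (Set.Ioi (0:ℝ)) := by
    rw [Set.disjoint_left]; exact fun x hx hx' => lt_asymm (Set.mem_Iio.mp hx) (Set.mem_Ioi.mp hx')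
  rw [← measure_union hd measurableSet_Ioi, Set.Iio_union_Ioi,
    measure_compl (measurableSet_singleton 0) (measure_ne_top _ _), h0, measure_univ, tsub_zero]

lemma gauss_lt {c : ℝ} (hc : 0 < c) {v : ℝ≥0} (hv : v ≠ 0) :
    gaussianReal c v (Set.Iio 0) < gaussianReal c v (Set.Ioi 0) := by
  have hmap : gaussianReal c v = (gaussianReal 0 v).map (· + c) := by
    rw [gaussianReal_map_add_const, zero_add]
  have hIio : gaussianReal c v (Set.Iio 0) = gaussianReal 0 v (Set.Iio (-c)) := by
    rw [hmap, Measure.map_apply (by fun_prop) measurableSet_Iio]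
    congr 1; ext x; simp
  have hIoi : gaussianReal c v (Set.Ioi 0) = gaussianReal 0 v (Set.Iio c) := by
    rw [hmap, Measure.map_apply (by fun_prop) measurableSet_Ioi]
    have h1 : (fun x : ℝ => x + c) ⁻¹' Set.Ioi 0 = Set.Ioi (-c) := by
      ext x; simp
    rw [h1]
    conv_lhs => rw [show gaussianReal (0:ℝ) v = (gaussianReal 0 v).map (fun x => -x) by
      rw [gauss_map_neg, neg_zero]]
    rw [Measure.map_apply measurable_neg measurableSet_Ioi]
    congr 1; ext x; simp [neg_lt]
  rw [hIio, hIoi]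
  have hsplit : Set.Iio c = Set.Iio (-c) ∪ Set.Ico (-c) c := by
    ext x; simp [Set.mem_Ico]; constructor
    · intro h; by_cases h' : x < -c
      · exact Or.inl h'
      · exact Or.inr ⟨le_of_not_gt h', h⟩
    · rintro (h | ⟨h1, h2⟩) <;> linarith
  have hdisj : Disjoint (Set.Iio (-c)) (Set.Ico (-c) c) := by
    rw [Set.disjoint_left]; rintro x hx ⟨hx1, hx2⟩; exact absurd hx1 (not_le.mpr hx)
  rw [hsplit, measure_union hdisj measurableSet_Ico]
  refine ENNReal.lt_add_right (measure_ne_top _ _) ?_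
  intro h0
  have := gaussianReal_absolutelyContinuous' 0 hv h0
  rw [Real.volume_Ico] at this
  simp at this
  linarith

theorem stmt_15 (c σ : ℝ) (hc : c ≠ 0) (hσ : 0 < σ)
    (v : ℝ≥0) (hv : (v : ℝ) = σ ^ 2)
    (μ : Measure (ℝ × ℝ))
    (hμ : μ = (1/2 : ℝ≥0∞) • ((gaussianReal c v).prod (gaussianReal c v))
        + (1/2 : ℝ≥0∞) • ((gaussianReal (-c) v).prod (gaussianReal (-c) v)))
    (marg : Measure ℝ)
    (hmarg : marg = (1/2 : ℝ≥0∞) • gaussianReal c v + (1/2 : ℝ≥0∞) • gaussianReal (-c) v) :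
    μ.map Prod.fst = marg ∧ μ.map Prod.snd = marg ∧
      (marg.prod marg) {p : ℝ × ℝ | p.1 * p.2 < 0} = 1/2 ∧
      μ {p : ℝ × ℝ | p.1 * p.2 < 0} < 1/2 := by
  have hvne : v ≠ 0 := by
    intro h
    rw [h] at hv
    simp at hv
    nlinarith
  set p := gaussianReal c v (Set.Iio 0) with hp_def
  set q := gaussianReal c v (Set.Ioi 0) with hq_def
  have h1 : p + q = 1 := gauss_add_one c hvne
  have hqneg : gaussianReal (-c) v (Set.Ioi 0) = p := gauss_Ioi_neg c v
  have hpneg : gaussianReal (-c) v (Set.Iio 0) = q := gauss_Iio_neg c v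
  have hne : p ≠ q := by
    rcases hc.lt_or_gt with h | h
    · have := gauss_lt (c := -c) (by linarith) hvne
      rw [hqneg, hpneg] at this
      exact (ne_of_lt this).symm
    · exact ne_of_lt (gauss_lt h hvne)
  -- set decomposition
  have hS : {p : ℝ × ℝ | p.1 * p.2 < 0}
      = (Set.Ioi 0 ×ˢ Set.Iio 0) ∪ (Set.Iio 0 ×ˢ Set.Ioi 0) := by
    ext ⟨x, y⟩
    simp [mul_neg_iff, Set.mem_prod]
  have hdisj : Disjoint ((Set.Ioi (0:ℝ)) ×ˢ (Set.Iio (0:ℝ)))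
      ((Set.Iio (0:ℝ)) ×ˢ (Set.Ioi (0:ℝ))) := by
    rw [Set.disjoint_left]
    rintro ⟨x, y⟩ ⟨hx, _⟩ ⟨hx', _⟩
    exact lt_asymm (Set.mem_Ioi.mp hx) (Set.mem_Iio.mp hx')
  have hmeas1 : MeasurableSet ((Set.Ioi (0:ℝ)) ×ˢ (Set.Iio (0:ℝ))) :=
    measurableSet_Ioi.prod measurableSet_Iio
  have hmeas2 : MeasurableSet ((Set.Iio (0:ℝ)) ×ˢ (Set.Ioi (0:ℝ))) :=
    measurableSet_Iio.prod measurableSet_Ioi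
  have hprodS : ∀ ν : Measure ℝ, SigmaFinite ν →
      (ν.prod ν) {p : ℝ × ℝ | p.1 * p.2 < 0}
        = ν (Set.Ioi 0) * ν (Set.Iio 0) + ν (Set.Iio 0) * ν (Set.Ioi 0) := by
    intro ν hν
    rw [hS, measure_union hdisj hmeas2, Measure.prod_prod, Measure.prod_prod]
  -- marginals
  have hmap1 : μ.map Prod.fst = marg := by
    rw [hμ, Measure.map_add _ _ measurable_fst, Measure.map_smul, Measure.map_smul,
      Measure.map_fst_prod, Measure.map_fst_prod, hmarg]
    simp
  have hmap2 : μ.map Prod.snd = marg := by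
    rw [hμ, Measure.map_add _ _ measurable_snd, Measure.map_smul, Measure.map_smul,
      Measure.map_snd_prod, Measure.map_snd_prod, hmarg]
    simp
  -- marg values
  have hmIoi : marg (Set.Ioi 0) = 1/2 := by
    rw [hmarg, Measure.add_apply, Measure.smul_apply, Measure.smul_apply, smul_eq_mul,
      smul_eq_mul, hqneg, ← hq_def, ← mul_add, add_comm q p, h1, mul_one]
  have hmIio : marg (Set.Iio 0) = 1/2 := by
    rw [hmarg, Measure.add_apply, Measure.smul_apply, Measure.smul_apply, smul_eq_mul,
      smul_eq_mul, hpneg, ← hp_def, ← mul_add, h1, mul_one]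
  have hmargS : (marg.prod marg) {p : ℝ × ℝ | p.1 * p.2 < 0} = 1/2 := by
    haveI hfm : IsFiniteMeasure marg := by
      constructor
      rw [hmarg, Measure.add_apply, Measure.smul_apply, Measure.smul_apply, smul_eq_mul,
        smul_eq_mul, measure_univ, measure_univ, mul_one, ENNReal.add_halves]
      exact ENNReal.one_lt_top
    rw [hprodS marg inferInstance, hmIoi, hmIio]
    rw [show ((1:ℝ≥0∞)/2 * (1/2) + 1/2 * (1/2)) = 1/2 by
      rw [← two_mul, ← mul_assoc, ENNReal.mul_div_cancel two_ne_zero ENNReal.ofNat_ne_top,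
        one_mul]]
  -- μ on S
  have hμS : μ {p : ℝ × ℝ | p.1 * p.2 < 0}
      = 1/2 * (q * p + p * q) + 1/2 * (p * q + q * p) := by
    rw [hμ, Measure.add_apply, Measure.smul_apply, Measure.smul_apply, smul_eq_mul, smul_eq_mul,
      hprodS _ inferInstance, hprodS _ inferInstance, hqneg, hpneg, ← hp_def, ← hq_def]
  have hpt : p ≠ ⊤ := measure_ne_top _ _
  have hqt : q ≠ ⊤ := measure_ne_top _ _
  refine ⟨hmap1, hmap2, hmargS, ?_⟩
  rw [hμS]
  have hfin : (1/2 * (q * p + p * q) + 1/2 * (p * q + q * p) : ℝ≥0∞) ≠ ⊤ := by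
    refine ENNReal.add_ne_top.mpr ⟨?_, ?_⟩ <;>
      exact ENNReal.mul_ne_top (by norm_num)
        (ENNReal.add_ne_top.mpr ⟨ENNReal.mul_ne_top (by assumption) (by assumption),
          ENNReal.mul_ne_top (by assumption) (by assumption)⟩)
  rw [← ENNReal.toReal_lt_toReal hfin (by norm_num)]
  rw [ENNReal.toReal_add (by
      exact ENNReal.mul_ne_top (by norm_num) (ENNReal.add_ne_top.mpr
        ⟨ENNReal.mul_ne_top hqt hpt, ENNReal.mul_ne_top hpt hqt⟩))
    (by
      exact ENNReal.mul_ne_top (by norm_num) (ENNReal.add_ne_top.mpr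
        ⟨ENNReal.mul_ne_top hpt hqt, ENNReal.mul_ne_top hqt hpt⟩)),
    ENNReal.toReal_mul, ENNReal.toReal_mul,
    ENNReal.toReal_add (ENNReal.mul_ne_top hqt hpt) (ENNReal.mul_ne_top hpt hqt),
    ENNReal.toReal_add (ENNReal.mul_ne_top hpt hqt) (ENNReal.mul_ne_top hqt hpt),
    ENNReal.toReal_mul, ENNReal.toReal_mul]
  have hPQ : p.toReal + q.toReal = 1 := by
    rw [← ENNReal.toReal_add hpt hqt, h1, ENNReal.toReal_one]
  have hPne : p.toReal ≠ q.toReal := fun h => hne ((ENNReal.toReal_eq_toReal_iff' hpt hqt).mp h)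
  have h12 : ((1:ℝ≥0∞)/2).toReal = 1/2 := by norm_num
  rw [h12]
  set P := p.toReal
  set Q := q.toReal
  have : (P - Q)^2 > 0 := sq_pos_of_ne_zero (sub_ne_zero.mpr hPne)
  nlinarith
end

section
/- Let n ≥ 1 and 0 < p < 1 with p ≠ 1/2. Let π* be the distribution on {0,1}^n assigning mass p to (1,...,1) and 1−p to (0,...,0), and let π̂ be the product of its marginals, i.e., the product measure whose each factor assigns p to 1 and 1−p to 0. Then δ_TV(π*, π̂) = (1/2)[ |p − p^n| + |(1−p) − (1−p)^n| + Σ over the remaining 2^n − 2 points of p^{k}(1−p)^{n−k} ] and in particular δ_TV(π*, π̂) ≥ 1 − p^n − (1−p)^n − max(p, 1−p); moreover δ_TV(π*, π̂) → 1 as n → ∞ when p is fixed in (0,1). -/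
noncomputable def tvP (p : ℝ) (n : ℕ) : ℝ :=
  (1/2) * ∑ a : Fin n → Bool,
    |(if a = (fun _ => true) then p else if a = (fun _ => false) then 1 - p else 0)
      - ∏ i, (if a i then p else 1 - p)|

open Finset

lemma sum_split {n : ℕ} (hn : 1 ≤ n) (f : (Fin n → Bool) → ℝ) :
    ∑ a : Fin n → Bool, f a
      = f (fun _ => true) + f (fun _ => false) +
        ∑ a ∈ Finset.univ.filter
            (fun a : Fin n → Bool => a ≠ (fun _ => true) ∧ a ≠ (fun _ => false)), f a := by
  classical
  have hTF : (fun _ => true : Fin n → Bool) ≠ (fun _ => false) := by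
    intro h
    have := congrFun h ⟨0, hn⟩
    simp at this
  rw [← Finset.sum_filter_add_sum_filter_not Finset.univ
      (fun a : Fin n → Bool => a = (fun _ => true) ∨ a = (fun _ => false))]
  congr 1
  · rw [show Finset.univ.filter
        (fun a : Fin n → Bool => a = (fun _ => true) ∨ a = (fun _ => false))
        = {fun _ => true, fun _ => false} by ext a; simp]
    rw [Finset.sum_pair hTF]
  · apply Finset.sum_congr
    · ext a; simp [not_or]
    · intros; rfl

lemma prod_sum_one (p : ℝ) (n : ℕ) :
    ∑ a : Fin n → Bool, ∏ i, (if a i then p else 1 - p) = 1 := by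
  classical
  have h := Finset.prod_univ_sum (ι := Fin n) (t := fun _ => (Finset.univ : Finset Bool))
      (f := fun _ b => if b then p else 1 - p)
  simp only [Fintype.sum_bool, Fintype.piFinset_univ, if_true, Bool.false_eq_true, if_false] at h
  rw [← h]
  simp

lemma tvP_eq (p : ℝ) (hp0 : 0 < p) (hp1 : p < 1) {n : ℕ} (hn : 1 ≤ n) :
    tvP p n = 1 - p ^ n - (1 - p) ^ n := by
  classical
  have hTF : (fun _ => true : Fin n → Bool) ≠ (fun _ => false) := by
    intro h
    have := congrFun h ⟨0, hn⟩
    simp at this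
  have hpn : p ^ n ≤ p := by
    calc p ^ n ≤ p ^ 1 := pow_le_pow_of_le_one hp0.le hp1.le hn
    _ = p := pow_one p
  have hqn : (1 - p) ^ n ≤ 1 - p := by
    calc (1-p) ^ n ≤ (1-p) ^ 1 := pow_le_pow_of_le_one (by linarith) (by linarith) hn
    _ = 1 - p := pow_one _
  have hS : ∑ a ∈ Finset.univ.filter
      (fun a : Fin n → Bool => a ≠ (fun _ => true) ∧ a ≠ (fun _ => false)),
      ∏ i, (if a i then p else 1 - p) = 1 - p ^ n - (1 - p) ^ n := by
    have h := prod_sum_one p n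
    rw [sum_split hn] at h
    simp only [if_true, Bool.false_eq_true, if_false, Finset.prod_const, Finset.card_univ,
      Fintype.card_fin] at h
    linarith
  have e3 : ∑ a ∈ Finset.univ.filter
      (fun a : Fin n → Bool => a ≠ (fun _ => true) ∧ a ≠ (fun _ => false)),
      |(if a = (fun _ => true) then p else if a = (fun _ => false) then 1 - p else 0)
        - ∏ i, (if a i then p else 1 - p)|
      = ∑ a ∈ Finset.univ.filter
      (fun a : Fin n → Bool => a ≠ (fun _ => true) ∧ a ≠ (fun _ => false)),
      ∏ i, (if a i then p else 1 - p) := by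
    apply Finset.sum_congr rfl
    intro a ha
    simp only [Finset.mem_filter] at ha
    rw [if_neg ha.2.1, if_neg ha.2.2, zero_sub, abs_neg, abs_of_nonneg]
    exact Finset.prod_nonneg (fun i _ => by split <;> linarith)
  unfold tvP
  rw [sum_split hn, e3, hS]
  simp only [if_pos rfl, if_neg hTF, if_neg hTF.symm, if_true, Bool.false_eq_true, if_false,
    Finset.prod_const, Finset.card_univ, Fintype.card_fin]
  rw [abs_of_nonneg (by linarith), abs_of_nonneg (by linarith)]
  ring

lemma sum_rest (p : ℝ) {n : ℕ} (hn : 1 ≤ n) :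
    ∑ a ∈ Finset.univ.filter
      (fun a : Fin n → Bool => a ≠ (fun _ => true) ∧ a ≠ (fun _ => false)),
      ∏ i, (if a i then p else 1 - p) = 1 - p ^ n - (1 - p) ^ n := by
  have h := prod_sum_one p n
  rw [sum_split hn] at h
  simp only [if_true, Bool.false_eq_true, if_false, Finset.prod_const, Finset.card_univ,
    Fintype.card_fin] at h
  linarith

open scoped Classical in
theorem stmt_17 (p : ℝ) (hp0 : 0 < p) (hp1 : p < 1) (hp : p ≠ 1/2) :
    (∀ n : ℕ, 1 ≤ n →
      tvP p n = (1/2) * (|p - p ^ n| + |(1 - p) - (1 - p) ^ n| +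
        ∑ a ∈ Finset.univ.filter
            (fun a : Fin n → Bool => a ≠ (fun _ => true) ∧ a ≠ (fun _ => false)),
          ∏ i, (if a i then p else 1 - p))) ∧
    (∀ n : ℕ, 1 ≤ n → tvP p n ≥ 1 - p ^ n - (1 - p) ^ n - max p (1 - p)) ∧
    Filter.Tendsto (tvP p) Filter.atTop (nhds 1) := by
  have hpow : ∀ n : ℕ, 1 ≤ n → p ^ n ≤ p ∧ (1 - p) ^ n ≤ 1 - p := by
    intro n hn
    constructor
    · calc p ^ n ≤ p ^ 1 := pow_le_pow_of_le_one hp0.le hp1.le hn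
        _ = p := pow_one p
    · calc (1-p) ^ n ≤ (1-p) ^ 1 := pow_le_pow_of_le_one (by linarith) (by linarith) hn
        _ = 1 - p := pow_one _
  refine ⟨?_, ?_, ?_⟩
  · intro n hn
    obtain ⟨h1, h2⟩ := hpow n hn
    rw [tvP_eq p hp0 hp1 hn, sum_rest p hn,
      abs_of_nonneg (by linarith), abs_of_nonneg (by linarith)]
    ring
  · intro n hn
    rw [tvP_eq p hp0 hp1 hn]
    have := le_max_left p (1 - p)
    linarith
  · have hp' := tendsto_pow_atTop_nhds_zero_of_lt_one hp0.le hp1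
    have hq' := tendsto_pow_atTop_nhds_zero_of_lt_one
      (by linarith : (0:ℝ) ≤ 1 - p) (by linarith)
    have h1 : Filter.Tendsto (fun n => 1 - p ^ n - (1 - p) ^ n) Filter.atTop (nhds 1) := by
      have := ((tendsto_const_nhds (x := (1:ℝ)) (f := Filter.atTop)).sub hp').sub hq'
      simpa using this
    refine Filter.Tendsto.congr' ?_ h1
    filter_upwards [Filter.eventually_ge_atTop 1] with n hn
    exact (tvP_eq p hp0 hp1 hn).symm
end
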